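/- Let p_i ∈ (0,1), q_i = 1-p_i, w_i = log(p_i/q_i), Φ = Σ_i (p_i - 1/2) w_i, and define g(t) = -tΦ + Σ_i log(p_i e^{-q_i w_i t} + q_i e^{p_i w_i t}) for t > 0. Then g'(1) = 0 and g attains its minimum over t > 0 at t = 1, with g(1) = Σ_i log(2√(p_i q_i)). -/

import Mathlib

open Real Finset

lemma key_exp1 {p : ℝ} (h0 : 0 < p) (h1 : p < 1) :
    Real.exp (p * Real.log (p / (1 - p)) * 1)
      = (p / (1 - p)) * Real.exp (-(1 - p) * Real.log (p / (1 - p)) * 1) := by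
  have hq : (0:ℝ) < 1 - p := by linarith
  have hpq : (0:ℝ) < p / (1 - p) := div_pos h0 hq
  have : p * Real.log (p / (1 - p)) * 1
      = Real.log (p / (1 - p)) + -(1 - p) * Real.log (p / (1 - p)) * 1 := by ring
  rw [this, Real.exp_add, Real.exp_log hpq]

-- value at 1
lemma val_one {p : ℝ} (h0 : 0 < p) (h1 : p < 1) :
    Real.log (p * Real.exp (-(1 - p) * Real.log (p / (1 - p)) * 1) +
        (1 - p) * Real.exp (p * Real.log (p / (1 - p)) * 1))
      = Real.log (2 * Real.sqrt (p * (1 - p))) + (p - 1/2) * Real.log (p / (1 - p)) := by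
  have hq : (0:ℝ) < 1 - p := by linarith
  have hE : (0:ℝ) < Real.exp (-(1 - p) * Real.log (p / (1 - p)) * 1) := Real.exp_pos _
  rw [key_exp1 h0 h1]
  have h2 : p * Real.exp (-(1 - p) * Real.log (p / (1 - p)) * 1) +
      (1 - p) * ((p / (1 - p)) * Real.exp (-(1 - p) * Real.log (p / (1 - p)) * 1))
      = 2 * p * Real.exp (-(1 - p) * Real.log (p / (1 - p)) * 1) := by
    field_simp; ring
  rw [h2]
  have hlpq : Real.log (p / (1 - p)) = Real.log p - Real.log (1 - p) :=
    Real.log_div (ne_of_gt h0) (ne_of_gt hq)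
  rw [Real.log_mul (by positivity) (ne_of_gt hE), Real.log_exp,
    Real.log_mul (by norm_num) (ne_of_gt h0),
    Real.log_mul (by norm_num) (by positivity), Real.log_sqrt (by positivity),
    Real.log_mul (ne_of_gt h0) (ne_of_gt hq), hlpq]
  ring

-- AM-GM lower bound
lemma lb {p : ℝ} (h0 : 0 < p) (h1 : p < 1) (t : ℝ) :
    Real.log (2 * Real.sqrt (p * (1 - p))) + (p - 1/2) * Real.log (p / (1 - p)) * t
      ≤ Real.log (p * Real.exp (-(1 - p) * Real.log (p / (1 - p)) * t) +
          (1 - p) * Real.exp (p * Real.log (p / (1 - p)) * t)) := by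
  have hq : (0:ℝ) < 1 - p := by linarith
  set w := Real.log (p / (1 - p)) with hw
  set a := p * Real.exp (-(1 - p) * w * t) with ha
  set b := (1 - p) * Real.exp (p * w * t) with hb
  have hapos : 0 < a := by positivity
  have hbpos : 0 < b := by positivity
  have hamgm : 2 * Real.sqrt (a * b) ≤ a + b := by
    nlinarith [sq_nonneg (Real.sqrt a - Real.sqrt b), Real.sq_sqrt hapos.le,
      Real.sq_sqrt hbpos.le, Real.sqrt_mul_self hapos.le,
      Real.sqrt_mul hapos.le b, Real.sqrt_nonneg a, Real.sqrt_nonneg b]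
  have he : Real.exp (-(1 - p) * w * t) * Real.exp (p * w * t)
      = Real.exp ((p - 1/2) * w * t) ^ 2 := by
    rw [← Real.exp_add, sq, ← Real.exp_add]; congr 1; ring
  have hab : a * b = (p * (1 - p)) * Real.exp ((p - 1/2) * w * t) ^ 2 := by
    rw [ha, hb, show p * Real.exp (-(1 - p) * w * t) * ((1 - p) * Real.exp (p * w * t))
      = p * (1 - p) * (Real.exp (-(1 - p) * w * t) * Real.exp (p * w * t)) from by ring, he]
  have hsab : Real.sqrt (a * b) = Real.sqrt (p * (1 - p)) * Real.exp ((p - 1/2) * w * t) := by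
    rw [hab, Real.sqrt_mul (by positivity), Real.sqrt_sq (Real.exp_pos _).le]
  have hle : 2 * Real.sqrt (p * (1 - p)) * Real.exp ((p - 1/2) * w * t) ≤ a + b := by
    calc 2 * Real.sqrt (p * (1 - p)) * Real.exp ((p - 1/2) * w * t)
        = 2 * Real.sqrt (a * b) := by rw [hsab]; ring
      _ ≤ a + b := hamgm
  have hlog := Real.log_le_log (by positivity) hle
  calc Real.log (2 * Real.sqrt (p * (1 - p))) + (p - 1/2) * w * t
      = Real.log (2 * Real.sqrt (p * (1 - p)) * Real.exp ((p - 1/2) * w * t)) := by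
        rw [Real.log_mul (by positivity) (ne_of_gt (Real.exp_pos _)), Real.log_exp]
    _ ≤ Real.log (a + b) := hlog

-- derivative per index
lemma deriv_one_idx {p : ℝ} (h0 : 0 < p) (h1 : p < 1) :
    HasDerivAt (fun t : ℝ =>
        Real.log (p * Real.exp (-(1 - p) * Real.log (p / (1 - p)) * t) +
          (1 - p) * Real.exp (p * Real.log (p / (1 - p)) * t)))
      ((p - 1/2) * Real.log (p / (1 - p))) 1 := by
  have hq : (0:ℝ) < 1 - p := by linarith
  set w := Real.log (p / (1 - p)) with hw
  have h1' : HasDerivAt (fun t : ℝ => -(1 - p) * w * t) (-(1 - p) * w) 1 := by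
    simpa using (hasDerivAt_id (1:ℝ)).const_mul (-(1 - p) * w)
  have h2' : HasDerivAt (fun t : ℝ => p * w * t) (p * w) 1 := by
    simpa using (hasDerivAt_id (1:ℝ)).const_mul (p * w)
  have hu : HasDerivAt (fun t : ℝ =>
      p * Real.exp (-(1 - p) * w * t) + (1 - p) * Real.exp (p * w * t))
      (p * (Real.exp (-(1 - p) * w * 1) * (-(1 - p) * w)) +
        (1 - p) * (Real.exp (p * w * 1) * (p * w))) 1 :=
    ((h1'.exp).const_mul p).add ((h2'.exp).const_mul (1 - p))
  have hpos : 0 < p * Real.exp (-(1 - p) * w * 1) + (1 - p) * Real.exp (p * w * 1) := by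
    positivity
  have := hu.log (ne_of_gt hpos)
  convert this using 1
  rw [key_exp1 h0 h1, ← hw]
  set E := Real.exp (-(1 - p) * w * 1) with hE
  have hEpos : 0 < E := Real.exp_pos _
  field_simp
  ring

/-- The Chernoff exponent `g(t) = -tΦ + ∑ log(pᵢ e^{-qᵢwᵢt} + qᵢ e^{pᵢwᵢt})` is
minimized over `t > 0` at `t = 1`, where it equals `∑ log(2√(pᵢqᵢ))`. -/
theorem stmt_5 (N : ℕ) (p : Fin N → ℝ) (hp : ∀ i, p i ∈ Set.Ioo (0:ℝ) 1) :
    HasDerivAt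
      (fun t : ℝ =>
        -t * (∑ i, (p i - 1/2) * Real.log (p i / (1 - p i))) +
          ∑ i, Real.log
            (p i * Real.exp (-(1 - p i) * Real.log (p i / (1 - p i)) * t) +
             (1 - p i) * Real.exp (p i * Real.log (p i / (1 - p i)) * t)))
      0 1 ∧
    (∀ t : ℝ, 0 < t →
      (-(1:ℝ) * (∑ i, (p i - 1/2) * Real.log (p i / (1 - p i))) +
          ∑ i, Real.log
            (p i * Real.exp (-(1 - p i) * Real.log (p i / (1 - p i)) * 1) +
             (1 - p i) * Real.exp (p i * Real.log (p i / (1 - p i)) * 1))) ≤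
      (-t * (∑ i, (p i - 1/2) * Real.log (p i / (1 - p i))) +
          ∑ i, Real.log
            (p i * Real.exp (-(1 - p i) * Real.log (p i / (1 - p i)) * t) +
             (1 - p i) * Real.exp (p i * Real.log (p i / (1 - p i)) * t)))) ∧
    (-(1:ℝ) * (∑ i, (p i - 1/2) * Real.log (p i / (1 - p i))) +
          ∑ i, Real.log
            (p i * Real.exp (-(1 - p i) * Real.log (p i / (1 - p i)) * 1) +
             (1 - p i) * Real.exp (p i * Real.log (p i / (1 - p i)) * 1))) =
      ∑ i, Real.log (2 * Real.sqrt (p i * (1 - p i))) := by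
  have hp0 : ∀ i, 0 < p i := fun i => (hp i).1
  have hp1 : ∀ i, p i < 1 := fun i => (hp i).2
  have h3 :
      (-(1:ℝ) * (∑ i, (p i - 1/2) * Real.log (p i / (1 - p i))) +
          ∑ i, Real.log
            (p i * Real.exp (-(1 - p i) * Real.log (p i / (1 - p i)) * 1) +
             (1 - p i) * Real.exp (p i * Real.log (p i / (1 - p i)) * 1))) =
      ∑ i, Real.log (2 * Real.sqrt (p i * (1 - p i))) := by
    rw [Finset.sum_congr rfl (fun i _ => val_one (hp0 i) (hp1 i)),
      Finset.sum_add_distrib]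
    ring
  refine ⟨?_, ?_, h3⟩
  · have hd1 : HasDerivAt
        (fun t : ℝ => -t * (∑ i, (p i - 1/2) * Real.log (p i / (1 - p i))))
        (-1 * (∑ i, (p i - 1/2) * Real.log (p i / (1 - p i)))) 1 := by
      simpa using (hasDerivAt_id (1:ℝ)).neg.mul_const
        (∑ i, (p i - 1/2) * Real.log (p i / (1 - p i)))
    have hd2 : HasDerivAt
        (fun t : ℝ => ∑ i, Real.log
            (p i * Real.exp (-(1 - p i) * Real.log (p i / (1 - p i)) * t) +
             (1 - p i) * Real.exp (p i * Real.log (p i / (1 - p i)) * t)))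
        (∑ i, (p i - 1/2) * Real.log (p i / (1 - p i))) 1 :=
      HasDerivAt.fun_sum (fun i _ => deriv_one_idx (hp0 i) (hp1 i))
    have := hd1.fun_add hd2
    exact this.congr_deriv (by ring)
  · intro t ht
    rw [h3]
    have hs : ∑ i, (Real.log (2 * Real.sqrt (p i * (1 - p i))) +
          (p i - 1/2) * Real.log (p i / (1 - p i)) * t) ≤
        ∑ i, Real.log
            (p i * Real.exp (-(1 - p i) * Real.log (p i / (1 - p i)) * t) +
             (1 - p i) * Real.exp (p i * Real.log (p i / (1 - p i)) * t)) :=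
      Finset.sum_le_sum (fun i _ => lb (hp0 i) (hp1 i) t)
    rw [Finset.sum_add_distrib] at hs
    have hmul : ∑ i, (p i - 1/2) * Real.log (p i / (1 - p i)) * t =
        (∑ i, (p i - 1/2) * Real.log (p i / (1 - p i))) * t := by
      rw [Finset.sum_mul]
    rw [hmul] at hs
    linarith
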